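/- arXiv:1009.1732 — 2 statements merged into one kernel-verified Lean document; each statement's English description precedes it below -/
import Mathlib

section
/- The almost-sure limit Θ of the black-ball proportion Z_t of a Pólya urn is distributed according to the Beta(b₀/s, w₀/s) law, i.e. the law of Θ on [0,1] has density θ^{b₀/s - 1}(1-θ)^{w₀/s - 1}/B(b₀/s, w₀/s) with respect to Lebesgue measure. -/
open Finset MeasureTheory ProbabilityTheory
open scoped NNReal ENNReal

/-- White weight of the Pólya urn after the draws `x 0, …, x (t-1)`
(`x i = true` means the `i`-th draw was black). -/
noncomputable def polyaW (w0 s : ℝ) (x : ℕ → Bool) : ℕ → ℝ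
  | 0 => w0
  | t + 1 => polyaW w0 s x t + if x t then 0 else s

/-- Black weight of the Pólya urn after the draws `x 0, …, x (t-1)`. -/
noncomputable def polyaB (b0 s : ℝ) (x : ℕ → Bool) : ℕ → ℝ
  | 0 => b0
  | t + 1 => polyaB b0 s x t + if x t then s else 0

/-- Joint probability that the first `n` draws of the Pólya urn are
`x 0, …, x (n-1)`. -/
noncomputable def polyaJoint (w0 b0 s : ℝ) (x : ℕ → Bool) (n : ℕ) : ℝ :=
  ∏ t ∈ range n,
    (if x t then polyaB b0 s x t else polyaW w0 s x t) /
      (polyaW w0 s x t + polyaB b0 s x t)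


/-- The Beta function `B(a,b) = Γ(a)Γ(b)/Γ(a+b)`. -/
noncomputable def betaFn (a b : ℝ) : ℝ :=
  Real.Gamma a * Real.Gamma b / Real.Gamma (a + b)

/-- The Beta(a,b) probability measure on `[0,1]`, given by the density
`θ^(a-1) (1-θ)^(b-1) / B(a,b)` with respect to Lebesgue measure. -/
noncomputable def betaMeasure (a b : ℝ) : Measure ℝ :=
  (volume.restrict (Set.Ioo (0 : ℝ) 1)).withDensity
    fun θ => ENNReal.ofReal (θ ^ (a - 1) * (1 - θ) ^ (b - 1) / betaFn a b)

noncomputable def PP (s : ℝ) (k : ℕ) (C : ℝ) : ℝ := ∏ j ∈ range k, (C + j * s)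

lemma PP_shift (s : ℝ) (k : ℕ) (C : ℝ) : C * PP s k (C + s) = PP s k C * (C + k * s) := by
  have h1 : PP s k (C + s) = ∏ j ∈ range k, (C + (j + 1 : ℕ) * s) := by
    unfold PP; apply Finset.prod_congr rfl; intro j _; push_cast; ring
  have h2 := Finset.prod_range_succ' (fun j : ℕ => (C + j * s)) k
  have h3 := Finset.prod_range_succ (fun j : ℕ => (C + j * s)) k
  simp only [Nat.cast_zero, zero_mul, add_zero] at h2
  rw [h1]; unfold PP; rw [mul_comm, ← h2, h3]

lemma PP_pos {s C : ℝ} (hs : 0 ≤ s) (hC : 0 < C) (k : ℕ) : 0 < PP s k C := by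
  unfold PP; exact Finset.prod_pos fun j _ => by positivity

lemma mart_step {s B T : ℝ} (hs : 0 ≤ s) (hB : 0 < B) (hT : B < T) (k : ℕ) :
    B / T * (PP s k (B + s) / PP s k (T + s)) +
      (T - B) / T * (PP s k B / PP s k (T + s)) = PP s k B / PP s k T := by
  have hT0 : (0:ℝ) < T := hB.trans hT
  have h1 : 0 < PP s k (T + s) := PP_pos hs (by linarith) k
  have h2 : 0 < PP s k T := PP_pos hs hT0 k
  have kB := PP_shift s k B
  have kT := PP_shift s k T
  field_simp
  linear_combination PP s k T * kB - PP s k B * kT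

variable {w0 b0 s : ℝ}

lemma polyaWB_total (x : ℕ → Bool) (t : ℕ) :
    polyaW w0 s x t + polyaB b0 s x t = w0 + b0 + s * t := by
  induction t with
  | zero => simp [polyaW, polyaB]
  | succ t ih =>
    simp only [polyaW, polyaB]
    push_cast
    rcases Bool.eq_false_or_eq_true (x t) with h | h <;> rw [h] <;> simp <;> linarith

lemma polyaB_congr {x y : ℕ → Bool} (t : ℕ) (h : ∀ i < t, x i = y i) :
    polyaB b0 s x t = polyaB b0 s y t := by
  induction t with
  | zero => rfl
  | succ t ih =>
    simp only [polyaB]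
    rw [ih fun i hi => h i (hi.trans t.lt_succ_self), h t t.lt_succ_self]

lemma polyaW_congr {x y : ℕ → Bool} (t : ℕ) (h : ∀ i < t, x i = y i) :
    polyaW w0 s x t = polyaW w0 s y t := by
  induction t with
  | zero => rfl
  | succ t ih =>
    simp only [polyaW]
    rw [ih fun i hi => h i (hi.trans t.lt_succ_self), h t t.lt_succ_self]

lemma polyaJoint_congr {x y : ℕ → Bool} (n : ℕ) (h : ∀ i < n, x i = y i) :
    polyaJoint w0 b0 s x n = polyaJoint w0 b0 s y n := by
  unfold polyaJoint
  apply Finset.prod_congr rfl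
  intro t ht
  rw [Finset.mem_range] at ht
  rw [h t ht, polyaB_congr t fun i hi => h i (hi.trans ht),
    polyaW_congr t fun i hi => h i (hi.trans ht)]

lemma polyaB_eq_sum (x : ℕ → Bool) (t : ℕ) :
    polyaB b0 s x t = b0 + s * ∑ i ∈ range t, (if x i then (1:ℝ) else 0) := by
  induction t with
  | zero => simp [polyaB]
  | succ t ih =>
    simp only [polyaB, Finset.sum_range_succ, ih]
    rcases Bool.eq_false_or_eq_true (x t) with h | h <;> rw [h] <;> simp <;> ring

lemma polyaJoint_succ (x : ℕ → Bool) (t : ℕ) :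
    polyaJoint w0 b0 s x (t + 1) = polyaJoint w0 b0 s x t *
      ((if x t then polyaB b0 s x t else polyaW w0 s x t) /
        (polyaW w0 s x t + polyaB b0 s x t)) := by
  unfold polyaJoint; rw [Finset.prod_range_succ]

lemma polyaB_pos (hb : 0 < b0) (hs : 0 < s) (x : ℕ → Bool) (t : ℕ) :
    0 < polyaB b0 s x t := by
  induction t with
  | zero => exact hb
  | succ t ih =>
    simp only [polyaB]
    rcases Bool.eq_false_or_eq_true (x t) with h | h <;> rw [h] <;> simp <;> linarith

lemma polyaW_pos (hw : 0 < w0) (hs : 0 < s) (x : ℕ → Bool) (t : ℕ) :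
    0 < polyaW w0 s x t := by
  induction t with
  | zero => exact hw
  | succ t ih =>
    simp only [polyaW]
    rcases Bool.eq_false_or_eq_true (x t) with h | h <;> rw [h] <;> simp <;> linarith

lemma polyaJoint_nonneg (hw : 0 < w0) (hb : 0 < b0) (hs : 0 < s) (x : ℕ → Bool) (n : ℕ) :
    0 ≤ polyaJoint w0 b0 s x n := by
  unfold polyaJoint
  apply Finset.prod_nonneg
  intro t _
  have h1 := polyaB_pos hb hs x t
  have h2 := polyaW_pos hw hs x t
  rcases Bool.eq_false_or_eq_true (x t) with h | h <;> rw [h] <;> simp <;> positivity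

noncomputable def extB (t : ℕ) (x : Fin t → Bool) : ℕ → Bool :=
  fun i => if h : i < t then x ⟨i, h⟩ else false


lemma extB_snoc_lt (t : ℕ) (y : Fin t → Bool) (b : Bool) {i : ℕ} (hi : i < t) :
    extB (t+1) (Fin.snoc y b) i = extB t y i := by
  unfold extB
  rw [dif_pos (hi.trans t.lt_succ_self), dif_pos hi]
  have : (⟨i, hi.trans t.lt_succ_self⟩ : Fin (t+1)) = Fin.castSucc ⟨i, hi⟩ := rfl
  rw [this, Fin.snoc_castSucc]

lemma extB_snoc_last (t : ℕ) (y : Fin t → Bool) (b : Bool) :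
    extB (t+1) (Fin.snoc y b) t = b := by
  unfold extB
  rw [dif_pos t.lt_succ_self]
  have : (⟨t, t.lt_succ_self⟩ : Fin (t+1)) = Fin.last t := rfl
  rw [this, Fin.snoc_last]

lemma key_sum {w0 b0 s : ℝ} (hw : 0 < w0) (hb : 0 < b0) (hs : 0 < s) (k : ℕ) :
    ∀ t : ℕ, ∑ x : Fin t → Bool, polyaJoint w0 b0 s (extB t x) t *
        (PP s k (polyaB b0 s (extB t x) t) / PP s k (w0 + b0 + s * t)) =
      PP s k b0 / PP s k (w0 + b0) := by
  intro t
  induction t with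
  | zero =>
    simp [polyaJoint, polyaB]
  | succ t ih =>
    rw [← (Fin.snocEquiv (fun _ => Bool)).sum_comp, Fintype.sum_prod_type, Finset.sum_comm]
    have step : ∀ y : Fin t → Bool,
        (∑ b : Bool, polyaJoint w0 b0 s (extB (t+1) (Fin.snoc y b)) (t+1) *
          (PP s k (polyaB b0 s (extB (t+1) (Fin.snoc y b)) (t+1)) /
            PP s k (w0 + b0 + s * ((t:ℝ)+1)))) =
        polyaJoint w0 b0 s (extB t y) t *
          (PP s k (polyaB b0 s (extB t y) t) / PP s k (w0 + b0 + s * t)) := by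
      intro y
      set B := polyaB b0 s (extB t y) t with hBdef
      set W := polyaW w0 s (extB t y) t with hWdef
      set T := w0 + b0 + s * t with hTdef
      have hWB : W + B = T := polyaWB_total _ t
      have hBpos : 0 < B := polyaB_pos hb hs _ t
      have hWpos : 0 < W := polyaW_pos hw hs _ t
      have hT1 : w0 + b0 + s * ((t : ℝ) + 1) = T + s := by rw [hTdef]; ring
      have hagree : ∀ b : Bool, ∀ i < t, extB (t+1) (Fin.snoc y b) i = extB t y i :=
        fun b i hi => extB_snoc_lt t y b hi
      have hBb : ∀ b : Bool, polyaB b0 s (extB (t+1) (Fin.snoc y b)) (t+1)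
          = B + if b then s else 0 := by
        intro b
        show polyaB b0 s _ t + _ = _
        rw [polyaB_congr t (hagree b), extB_snoc_last]
      have hJb : ∀ b : Bool, polyaJoint w0 b0 s (extB (t+1) (Fin.snoc y b)) (t+1)
          = polyaJoint w0 b0 s (extB t y) t * ((if b then B else W) / T) := by
        intro b
        rw [polyaJoint_succ, polyaJoint_congr t (hagree b),
          polyaB_congr t (hagree b), polyaW_congr t (hagree b), extB_snoc_last,
          ← hBdef, ← hWdef, hWB]
      have hBbT : polyaB b0 s (extB (t+1) (Fin.snoc y true)) (t+1) = B + s := by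
        rw [hBb true]; simp
      have hBbF : polyaB b0 s (extB (t+1) (Fin.snoc y false)) (t+1) = B := by
        rw [hBb false]; simp
      have hJbT : polyaJoint w0 b0 s (extB (t+1) (Fin.snoc y true)) (t+1)
          = polyaJoint w0 b0 s (extB t y) t * (B / T) := by rw [hJb true]; simp
      have hJbF : polyaJoint w0 b0 s (extB (t+1) (Fin.snoc y false)) (t+1)
          = polyaJoint w0 b0 s (extB t y) t * (W / T) := by rw [hJb false]; simp
      rw [Fintype.sum_bool]
      rw [hJbT, hJbF, hBbT, hBbF, hT1]
      have hms := mart_step (le_of_lt hs) hBpos (by linarith : B < T) k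
      have hW : W = T - B := by linarith
      rw [hW]
      linear_combination polyaJoint w0 b0 s (extB t y) t * hms
    simp only [Fin.snocEquiv, Equiv.coe_fn_mk]
    push_cast
    have goal_eq : (∑ y : Fin t → Bool, ∑ b : Bool,
        polyaJoint w0 b0 s (extB (t + 1) (Fin.snoc y b)) (t + 1) *
          (PP s k (polyaB b0 s (extB (t + 1) (Fin.snoc y b)) (t + 1)) /
            PP s k (w0 + b0 + s * ((t:ℝ) + 1)))) = PP s k b0 / PP s k (w0 + b0) := by
      rw [Finset.sum_congr rfl fun y _ => step y, ih]
    exact goal_eq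


-- continuity of PP in C
lemma PP_continuous (s : ℝ) (k : ℕ) : Continuous (PP s k) := by
  unfold PP
  exact continuous_finset_prod _ fun j _ => continuous_id.add continuous_const


lemma integral_M
    {Ω : Type*} {mΩ : MeasurableSpace Ω} {P : Measure Ω} [IsProbabilityMeasure P]
    {w0 b0 s : ℝ} (hw : 0 < w0) (hb : 0 < b0) (hs : 0 < s)
    (X : ℕ → Ω → ℝ) (hX : ∀ t, StronglyMeasurable (X t))
    (hval : ∀ t ω, X t ω = 0 ∨ X t ω = 1)
    (hlaw : ∀ (n : ℕ) (x : ℕ → Bool),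
      P {ω | ∀ t < n, X t ω = if x t then 1 else 0} =
        ENNReal.ofReal (polyaJoint w0 b0 s x n))
    (k t : ℕ) :
    ∫ ω, PP s k (b0 + s * ∑ i ∈ range t, X i ω) / PP s k (w0 + b0 + s * t) ∂P =
      PP s k b0 / PP s k (w0 + b0) := by
  set A : (Fin t → Bool) → Set Ω :=
    fun x => {ω | ∀ i < t, X i ω = if extB t x i then 1 else 0} with hA
  have hAmeas : ∀ x, MeasurableSet (A x) := by
    intro x
    have : A x = ⋂ (i : ℕ) (_ : i < t), (X i) ⁻¹' {if extB t x i then (1:ℝ) else 0} := by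
      ext ω; simp [hA, Set.mem_iInter]
    rw [this]
    exact MeasurableSet.iInter fun i => MeasurableSet.iInter fun _ =>
      (hX i).measurable (measurableSet_singleton _)
  have hfun : (fun ω => PP s k (b0 + s * ∑ i ∈ range t, X i ω) / PP s k (w0 + b0 + s * t))
      = fun ω => ∑ x : Fin t → Bool, Set.indicator (A x)
          (fun _ => PP s k (polyaB b0 s (extB t x) t) / PP s k (w0 + b0 + s * t)) ω := by
    funext ω
    set x0 : Fin t → Bool := fun i => decide (X i ω = 1) with hx0
    have hmem : ω ∈ A x0 := by
      intro i hi
      rcases hval i ω with h | h <;> simp [extB, hi, hx0, h]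
    rw [Finset.sum_eq_single x0]
    · rw [Set.indicator_of_mem hmem]
      congr 2
      rw [polyaB_eq_sum]
      congr 1
      congr 1
      apply Finset.sum_congr rfl
      intro i hi
      rw [Finset.mem_range] at hi
      rw [← hmem i hi]
    · intro x _ hx
      apply Set.indicator_of_notMem
      intro hmem'
      apply hx
      funext i
      have hi : (i : ℕ) < t := i.isLt
      have h1 := hmem' i hi
      have h2 : extB t x i = x i := by simp [extB, hi]
      rw [h2] at h1
      rcases Bool.eq_false_or_eq_true (x i) with h | h
      · rw [h] at h1 ⊢
        norm_num at h1
        rw [hx0]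
        simp [h1]
      · rw [h] at h1 ⊢
        norm_num at h1
        rw [hx0]
        simp [h1]
    · intro h
      exact absurd (Finset.mem_univ x0) h
  rw [hfun]
  have hint : ∀ x : Fin t → Bool, Integrable (Set.indicator (A x)
      (fun _ : Ω => PP s k (polyaB b0 s (extB t x) t) / PP s k (w0 + b0 + s * t))) P :=
    fun x => (integrable_const _).indicator (hAmeas x)
  rw [integral_finset_sum _ fun x _ => hint x]
  have hPA : ∀ x : Fin t → Bool, (P (A x)).toReal = polyaJoint w0 b0 s (extB t x) t := by
    intro x
    rw [hA]
    simp only []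
    rw [hlaw t (extB t x), ENNReal.toReal_ofReal (polyaJoint_nonneg hw hb hs _ t)]
  calc ∑ x : Fin t → Bool, ∫ ω, Set.indicator (A x)
        (fun _ => PP s k (polyaB b0 s (extB t x) t) / PP s k (w0 + b0 + s * t)) ω ∂P
      = ∑ x : Fin t → Bool, polyaJoint w0 b0 s (extB t x) t *
          (PP s k (polyaB b0 s (extB t x) t) / PP s k (w0 + b0 + s * t)) := by
        apply Finset.sum_congr rfl
        intro x _
        rw [integral_indicator_const _ (hAmeas x), measureReal_def, hPA x, smul_eq_mul]
    _ = PP s k b0 / PP s k (w0 + b0) := key_sum hw hb hs k t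

lemma moment_lemma
    {Ω : Type*} {mΩ : MeasurableSpace Ω} {P : Measure Ω} [IsProbabilityMeasure P]
    {w0 b0 s : ℝ} (hw : 0 < w0) (hb : 0 < b0) (hs : 0 < s)
    (X : ℕ → Ω → ℝ) (hX : ∀ t, StronglyMeasurable (X t))
    (hval : ∀ t ω, X t ω = 0 ∨ X t ω = 1)
    (hlaw : ∀ (n : ℕ) (x : ℕ → Bool),
      P {ω | ∀ t < n, X t ω = if x t then 1 else 0} =
        ENNReal.ofReal (polyaJoint w0 b0 s x n))
    (Θ : Ω → ℝ) (hΘmeas : Measurable Θ)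
    (hΘ : ∀ᵐ ω ∂P,
      Filter.Tendsto
        (fun t =>
          (b0 + s * ∑ i ∈ range t, X i ω) /
            ((w0 + s * ∑ i ∈ range t, (1 - X i ω)) +
              (b0 + s * ∑ i ∈ range t, X i ω)))
        Filter.atTop (nhds (Θ ω))) (k : ℕ) :
    (∫ ω, (Θ ω) ^ k ∂P = PP s k b0 / PP s k (w0 + b0)) ∧
      (∀ᵐ ω ∂P, Θ ω ∈ Set.Icc (0:ℝ) 1) := by
  -- denominators
  have hden : ∀ (ω : Ω) (t : ℕ),
      (w0 + s * ∑ i ∈ range t, (1 - X i ω)) + (b0 + s * ∑ i ∈ range t, X i ω)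
        = w0 + b0 + s * t := by
    intro ω t
    have : ∑ i ∈ range t, (1 - X i ω) = t - ∑ i ∈ range t, X i ω := by
      rw [Finset.sum_sub_distrib]
      simp
    rw [this]; ring
  have hX01 : ∀ (ω : Ω) (i : ℕ), 0 ≤ X i ω ∧ X i ω ≤ 1 := by
    intro ω i
    rcases hval i ω with h | h <;> rw [h] <;> norm_num
  have hNbd : ∀ (ω : Ω) (t : ℕ), 0 ≤ ∑ i ∈ range t, X i ω ∧
      ∑ i ∈ range t, X i ω ≤ t := by
    intro ω t
    constructor
    · exact Finset.sum_nonneg fun i _ => (hX01 ω i).1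
    · calc ∑ i ∈ range t, X i ω ≤ ∑ i ∈ range t, 1 :=
        Finset.sum_le_sum fun i _ => (hX01 ω i).2
      _ = t := by simp
  have hTpos : ∀ t : ℕ, (0:ℝ) < w0 + b0 + s * t := by
    intro t; positivity
  -- Z form
  have hZform : ∀ᵐ ω ∂P, Filter.Tendsto
      (fun t => (b0 + s * ∑ i ∈ range t, X i ω) / (w0 + b0 + s * t))
      Filter.atTop (nhds (Θ ω)) := by
    filter_upwards [hΘ] with ω hω
    convert hω using 2 with t
    rw [hden ω t]
  -- Z_t ∈ [0,1]
  have hZmem : ∀ (ω : Ω) (t : ℕ),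
      (b0 + s * ∑ i ∈ range t, X i ω) / (w0 + b0 + s * t) ∈ Set.Icc (0:ℝ) 1 := by
    intro ω t
    have h1 := (hNbd ω t).1
    have h2 := (hNbd ω t).2
    constructor
    · positivity
    · rw [div_le_one (hTpos t)]
      nlinarith [hs.le]
  -- Θ ∈ [0,1] a.e.
  have hΘmem : ∀ᵐ ω ∂P, Θ ω ∈ Set.Icc (0:ℝ) 1 := by
    filter_upwards [hZform] with ω hω
    exact isClosed_Icc.mem_of_tendsto hω (Filter.Eventually.of_forall fun t => hZmem ω t)
  refine ⟨?_, hΘmem⟩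
  -- M_t
  set M : ℕ → Ω → ℝ := fun t ω =>
    PP s k (b0 + s * ∑ i ∈ range t, X i ω) / PP s k (w0 + b0 + s * t) with hM
  -- convergence M_t → Θ^k a.e.
  have hconv : ∀ᵐ ω ∂P, Filter.Tendsto (fun t => M t ω) Filter.atTop (nhds ((Θ ω) ^ k)) := by
    filter_upwards [hZform] with ω hω
    have hfac : ∀ j : ℕ, Filter.Tendsto
        (fun t => (b0 + s * ∑ i ∈ range t, X i ω + j * s) / (w0 + b0 + s * t + j * s))
        Filter.atTop (nhds (Θ ω)) := by
      intro j
      have hT : Filter.Tendsto (fun t : ℕ => w0 + b0 + s * t) Filter.atTop Filter.atTop := by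
        apply Filter.tendsto_atTop_add_const_left
        exact (tendsto_natCast_atTop_atTop).const_mul_atTop hs
      have h0 : Filter.Tendsto (fun t : ℕ => (j * s) / (w0 + b0 + s * t))
          Filter.atTop (nhds 0) := Filter.Tendsto.div_atTop tendsto_const_nhds hT
      have heq : ∀ t : ℕ, (b0 + s * ∑ i ∈ range t, X i ω + j * s) / (w0 + b0 + s * t + j * s)
          = ((b0 + s * ∑ i ∈ range t, X i ω) / (w0 + b0 + s * t) + (j * s) / (w0 + b0 + s * t)) /
            (1 + (j * s) / (w0 + b0 + s * t)) := by
        intro t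
        have hT0 := hTpos t
        have hT0' : w0 + b0 + s * t ≠ 0 := ne_of_gt hT0
        field_simp
      simp_rw [heq]
      have := Filter.Tendsto.div (hω.add h0) (tendsto_const_nhds.add h0) (by norm_num : (1:ℝ) + 0 ≠ 0)
      convert this using 2 <;> simp
    have hMfac : ∀ t : ℕ, M t ω = ∏ j ∈ range k,
        (b0 + s * ∑ i ∈ range t, X i ω + j * s) / (w0 + b0 + s * t + j * s) := by
      intro t
      rw [hM]; simp only [PP]
      rw [Finset.prod_div_distrib]
    simp_rw [hMfac]
    have := tendsto_finset_prod (range k) (fun j (_ : j ∈ range k) => hfac j)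
    simpa using this
  -- bound
  have hbound : ∀ (t : ℕ), ∀ᵐ ω ∂P, ‖M t ω‖ ≤ (1:ℝ) := by
    intro t
    apply Filter.Eventually.of_forall
    intro ω
    rw [Real.norm_eq_abs, abs_le]
    have h1 := (hNbd ω t).1
    have h2 := (hNbd ω t).2
    have hfac : ∀ j ∈ range k, (0:ℝ) ≤ (b0 + s * ∑ i ∈ range t, X i ω + j * s) /
        (w0 + b0 + s * t + j * s) ∧ (b0 + s * ∑ i ∈ range t, X i ω + j * s) /
        (w0 + b0 + s * t + j * s) ≤ 1 := by
      intro j _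
      have hT0 : (0:ℝ) < w0 + b0 + s * t + j * s := by positivity
      constructor
      · positivity
      · rw [div_le_one hT0]
        nlinarith [hs.le]
    have hMfac : M t ω = ∏ j ∈ range k,
        (b0 + s * ∑ i ∈ range t, X i ω + j * s) / (w0 + b0 + s * t + j * s) := by
      rw [hM]; simp only [PP]; rw [Finset.prod_div_distrib]
    rw [hMfac]
    constructor
    · have : (0:ℝ) ≤ ∏ j ∈ range k, (b0 + s * ∑ i ∈ range t, X i ω + j * s) /
          (w0 + b0 + s * t + j * s) := Finset.prod_nonneg fun j hj => (hfac j hj).1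
      linarith
    · exact Finset.prod_le_one (fun j hj => (hfac j hj).1) (fun j hj => (hfac j hj).2)
  -- measurability
  have hmeas : ∀ t : ℕ, AEStronglyMeasurable (M t) P := by
    intro t
    apply StronglyMeasurable.aestronglyMeasurable
    have hnum : StronglyMeasurable (fun ω => PP s k (b0 + s * ∑ i ∈ range t, X i ω)) :=
      (PP_continuous s k).comp_stronglyMeasurable
        (stronglyMeasurable_const.add (stronglyMeasurable_const.mul
          (Finset.stronglyMeasurable_fun_sum _ fun i _ => hX i)))
    rw [hM]
    simp only [div_eq_mul_inv]
    exact hnum.mul_const _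
  -- dominated convergence
  have hDCT := MeasureTheory.tendsto_integral_of_dominated_convergence
    (fun _ : Ω => (1:ℝ)) hmeas (integrable_const 1) hbound hconv
  have hconst : ∀ t : ℕ, ∫ ω, M t ω ∂P = PP s k b0 / PP s k (w0 + b0) := fun t =>
    integral_M hw hb hs X hX hval hlaw k t
  simp_rw [hconst] at hDCT
  exact (tendsto_nhds_unique tendsto_const_nhds hDCT).symm

lemma betaFn_pos {a b : ℝ} (ha : 0 < a) (hb : 0 < b) : 0 < betaFn a b := by
  unfold betaFn
  have h1 := Real.Gamma_pos_of_pos ha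
  have h2 := Real.Gamma_pos_of_pos hb
  have h3 := Real.Gamma_pos_of_pos (by linarith : 0 < a + b)
  positivity

lemma complex_integrand_eq {a b : ℝ} (x : ℝ) (hx : x ∈ Set.Icc (0:ℝ) 1) :
    (x : ℂ) ^ ((a : ℂ) - 1) * (1 - (x : ℂ)) ^ ((b : ℂ) - 1)
      = ((x ^ (a - 1) * (1 - x) ^ (b - 1) : ℝ) : ℂ) := by
  obtain ⟨h0, h1⟩ := hx
  rw [Complex.ofReal_mul, Complex.ofReal_cpow h0, Complex.ofReal_cpow (by linarith : 0 ≤ 1 - x)]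
  push_cast
  ring_nf

lemma real_beta_integrable {a b : ℝ} (ha : 0 < a) (hb : 0 < b) :
    IntegrableOn (fun x : ℝ => x ^ (a - 1) * (1 - x) ^ (b - 1)) (Set.Ioo 0 1) := by
  have hc : IntervalIntegrable
      (fun x : ℝ => (x : ℂ) ^ ((a:ℂ) - 1) * (1 - (x : ℂ)) ^ ((b:ℂ) - 1)) volume 0 1 :=
    Complex.betaIntegral_convergent (by simpa using ha) (by simpa using hb)
  have hIoc : IntegrableOn
      (fun x : ℝ => (x : ℂ) ^ ((a:ℂ) - 1) * (1 - (x : ℂ)) ^ ((b:ℂ) - 1)) (Set.Ioc 0 1) := by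
    rwa [intervalIntegrable_iff_integrableOn_Ioc_of_le (by norm_num : (0:ℝ) ≤ 1)] at hc
  have hre : IntegrableOn
      (fun x : ℝ => ((x : ℂ) ^ ((a:ℂ) - 1) * (1 - (x : ℂ)) ^ ((b:ℂ) - 1)).re) (Set.Ioc 0 1) :=
    hIoc.re
  apply (IntegrableOn.mono_set · Set.Ioo_subset_Ioc_self)
  apply hre.congr_fun ?_ measurableSet_Ioc
  intro x hx
  show (_ * _ : ℂ).re = _
  rw [complex_integrand_eq x ⟨hx.1.le, hx.2⟩, Complex.ofReal_re]

lemma real_beta_integral {a b : ℝ} (ha : 0 < a) (hb : 0 < b) :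
    ∫ x in Set.Ioo (0:ℝ) 1, x ^ (a - 1) * (1 - x) ^ (b - 1) = betaFn a b := by
  have key := Complex.Gamma_mul_Gamma_eq_betaIntegral
    (by simpa using ha : 0 < Complex.re (a:ℂ)) (by simpa using hb : 0 < Complex.re (b:ℂ))
  have hGab : Complex.Gamma ((a:ℂ) + (b:ℂ)) ≠ 0 := by
    rw [← Complex.ofReal_add, Complex.Gamma_ofReal]
    exact_mod_cast (Real.Gamma_pos_of_pos (by linarith : 0 < a + b)).ne'
  have hbeta : Complex.betaIntegral (a:ℂ) (b:ℂ)
      = ((betaFn a b : ℝ) : ℂ) := by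
    have : Complex.betaIntegral (a:ℂ) (b:ℂ)
        = Complex.Gamma a * Complex.Gamma b / Complex.Gamma ((a:ℂ) + (b:ℂ)) := by
      field_simp [key]
      rw [key]; ring
    rw [this, Complex.Gamma_ofReal, Complex.Gamma_ofReal, ← Complex.ofReal_add,
      Complex.Gamma_ofReal]
    unfold betaFn
    push_cast
    ring
  have hInt : Complex.betaIntegral (a:ℂ) (b:ℂ)
      = ((∫ x in Set.Ioo (0:ℝ) 1, x ^ (a - 1) * (1 - x) ^ (b - 1) : ℝ) : ℂ) := by
    unfold Complex.betaIntegral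
    rw [intervalIntegral.integral_congr (g := fun x : ℝ =>
        ((x ^ (a - 1) * (1 - x) ^ (b - 1) : ℝ) : ℂ))
      (fun x hx => complex_integrand_eq x (by rwa [Set.uIcc_of_le (by norm_num)] at hx))]
    rw [intervalIntegral.integral_ofReal]
    congr 1
    rw [intervalIntegral.integral_of_le (by norm_num : (0:ℝ) ≤ 1),
      MeasureTheory.integral_Ioc_eq_integral_Ioo]
  rw [hInt] at hbeta
  exact_mod_cast hbeta

lemma Gamma_prod {a : ℝ} (ha : 0 < a) (k : ℕ) :
    Real.Gamma (a + k) = (∏ j ∈ range k, (a + j)) * Real.Gamma a := by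
  induction k with
  | zero => simp
  | succ k ih =>
    have h1 : a + (k + 1 : ℕ) = (a + k) + 1 := by push_cast; ring
    rw [h1, Real.Gamma_add_one (by positivity : a + (k:ℝ) ≠ 0), ih,
      Finset.prod_range_succ]
    ring

lemma betaFn_ratio {a b : ℝ} (ha : 0 < a) (hb : 0 < b) (k : ℕ) :
    betaFn (a + k) b = (∏ j ∈ range k, (a + j) / (a + b + j)) * betaFn a b := by
  unfold betaFn
  have h1 : a + (k:ℝ) + b = (a + b) + k := by ring
  rw [h1, Gamma_prod ha k, Gamma_prod (by linarith : 0 < a + b) k,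
    Finset.prod_div_distrib]
  have h2 : Real.Gamma (a + b) ≠ 0 := (Real.Gamma_pos_of_pos (by linarith)).ne'
  have h3 : (∏ j ∈ range k, (a + b + (j:ℝ))) ≠ 0 :=
    ne_of_gt (Finset.prod_pos fun j _ => by positivity)
  field_simp

lemma dens_measurable (a b : ℝ) :
    Measurable fun θ : ℝ => Real.toNNReal (θ ^ (a - 1) * (1 - θ) ^ (b - 1) / betaFn a b) := by
  apply Measurable.real_toNNReal
  apply Measurable.div_const
  exact (measurable_id'.pow_const _).mul ((measurable_const.sub measurable_id').pow_const _)

lemma beta_moment {a b : ℝ} (ha : 0 < a) (hb : 0 < b) (k : ℕ) :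
    ∫ x, x ^ k ∂(_root_.betaMeasure a b) = ∏ j ∈ range k, (a + j) / (a + b + j) := by
  have hofReal : (fun θ : ℝ => ENNReal.ofReal (θ ^ (a - 1) * (1 - θ) ^ (b - 1) / betaFn a b))
      = fun θ : ℝ => ((Real.toNNReal (θ ^ (a - 1) * (1 - θ) ^ (b - 1) / betaFn a b) : ℝ≥0) :
        ENNReal) := rfl
  unfold _root_.betaMeasure
  rw [hofReal, integral_withDensity_eq_integral_smul (dens_measurable a b)]
  have hcong : ∫ θ in Set.Ioo (0:ℝ) 1,
        (Real.toNNReal (θ ^ (a - 1) * (1 - θ) ^ (b - 1) / betaFn a b)) • θ ^ k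
      = ∫ θ in Set.Ioo (0:ℝ) 1, θ ^ ((a + k) - 1) * (1 - θ) ^ (b - 1) / betaFn a b := by
    apply setIntegral_congr_fun measurableSet_Ioo
    intro θ hθ
    obtain ⟨h0, h1⟩ := hθ
    show (Real.toNNReal (θ ^ (a - 1) * (1 - θ) ^ (b - 1) / betaFn a b)) • θ ^ k = _
    have hd0 : 0 ≤ θ ^ (a - 1) * (1 - θ) ^ (b - 1) / betaFn a b := by
      have := betaFn_pos ha hb
      have e1 : (0:ℝ) ≤ θ ^ (a - 1) := Real.rpow_nonneg h0.le _
      have e2 : (0:ℝ) ≤ (1 - θ) ^ (b - 1) := Real.rpow_nonneg (by linarith) _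
      positivity
    rw [NNReal.smul_def, smul_eq_mul, Real.coe_toNNReal _ hd0]
    have hpow : θ ^ (a - 1) * θ ^ k = θ ^ ((a + k) - 1) := by
      rw [← Real.rpow_natCast θ k, ← Real.rpow_add h0]
      congr 1
      ring
    field_simp
    rw [← hpow]
  rw [hcong, integral_div, real_beta_integral (by positivity : (0:ℝ) < a + k) hb,
    betaFn_ratio ha hb k]
  field_simp [(betaFn_pos ha hb).ne']

lemma beta_isProb {a b : ℝ} (ha : 0 < a) (hb : 0 < b) :
    IsProbabilityMeasure (_root_.betaMeasure a b) := by
  constructor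
  unfold _root_.betaMeasure
  rw [withDensity_apply _ MeasurableSet.univ, Measure.restrict_univ]
  have hInt : IntegrableOn (fun θ : ℝ => θ ^ (a - 1) * (1 - θ) ^ (b - 1) / betaFn a b)
      (Set.Ioo 0 1) := (real_beta_integrable ha hb).div_const _
  have hae : 0 ≤ᵐ[volume.restrict (Set.Ioo (0:ℝ) 1)]
      fun θ : ℝ => θ ^ (a - 1) * (1 - θ) ^ (b - 1) / betaFn a b := by
    filter_upwards [ae_restrict_mem measurableSet_Ioo] with θ hθ
    have := betaFn_pos ha hb
    have e1 : (0:ℝ) ≤ θ ^ (a - 1) := Real.rpow_nonneg hθ.1.le _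
    have e2 : (0:ℝ) ≤ (1 - θ) ^ (b - 1) := Real.rpow_nonneg (by linarith [hθ.2]) _
    positivity
  rw [← ofReal_integral_eq_lintegral_ofReal hInt hae]
  rw [integral_div, real_beta_integral ha hb, div_self (betaFn_pos ha hb).ne']
  simp

lemma beta_support {a b : ℝ} : _root_.betaMeasure a b (Set.Icc (0:ℝ) 1)ᶜ = 0 := by
  unfold _root_.betaMeasure
  rw [withDensity_apply _ (measurableSet_Icc.compl)]
  rw [Measure.restrict_restrict (measurableSet_Icc.compl)]
  have : (Set.Icc (0:ℝ) 1)ᶜ ∩ Set.Ioo 0 1 = ∅ := by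
    apply Set.eq_empty_iff_forall_notMem.mpr
    rintro x ⟨hx1, hx2⟩
    exact hx1 ⟨hx2.1.le, hx2.2.le⟩
  rw [this]
  simp

lemma integrable_pow_of_supp {μ : Measure ℝ} [IsProbabilityMeasure μ]
    (hμs : μ (Set.Icc (0:ℝ) 1)ᶜ = 0) (i : ℕ) :
    Integrable (fun x : ℝ => x ^ i) μ := by
  have hae : ∀ᵐ x ∂μ, x ∈ Set.Icc (0:ℝ) 1 := by
    rw [MeasureTheory.ae_iff]
    convert hμs using 2 <;> rfl
  apply Integrable.mono' (integrable_const (1:ℝ))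
    (measurable_id.pow_const i).aestronglyMeasurable
  filter_upwards [hae] with x hx
  rw [Real.norm_eq_abs, abs_pow]
  apply pow_le_one₀ (abs_nonneg x)
  rw [abs_le]
  exact ⟨by linarith [hx.1], hx.2⟩

lemma poly_integral_eq {μ ν : Measure ℝ} [IsProbabilityMeasure μ] [IsProbabilityMeasure ν]
    (hμs : μ (Set.Icc (0:ℝ) 1)ᶜ = 0) (hνs : ν (Set.Icc (0:ℝ) 1)ᶜ = 0)
    (hmom : ∀ k : ℕ, ∫ x, x ^ k ∂μ = ∫ x, x ^ k ∂ν) (p : Polynomial ℝ) :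
    ∫ x, p.eval x ∂μ = ∫ x, p.eval x ∂ν := by
  have hev : ∀ x : ℝ, p.eval x = ∑ i ∈ range (p.natDegree + 1), p.coeff i * x ^ i := by
    intro x; exact p.eval_eq_sum_range x
  simp_rw [hev]
  rw [integral_finset_sum _ fun i _ => (integrable_pow_of_supp hμs i).const_mul _,
    integral_finset_sum _ fun i _ => (integrable_pow_of_supp hνs i).const_mul _]
  apply Finset.sum_congr rfl
  intro i _
  rw [integral_const_mul, integral_const_mul, hmom i]

lemma measure_ext_of_moments {μ ν : Measure ℝ} [IsProbabilityMeasure μ] [IsProbabilityMeasure ν]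
    (hμs : μ (Set.Icc (0:ℝ) 1)ᶜ = 0) (hνs : ν (Set.Icc (0:ℝ) 1)ᶜ = 0)
    (hmom : ∀ k : ℕ, ∫ x, x ^ k ∂μ = ∫ x, x ^ k ∂ν) : μ = ν := by
  have hμae : ∀ᵐ x ∂μ, x ∈ Set.Icc (0:ℝ) 1 := by
    rw [MeasureTheory.ae_iff]; convert hμs using 2 <;> rfl
  have hνae : ∀ᵐ x ∂ν, x ∈ Set.Icc (0:ℝ) 1 := by
    rw [MeasureTheory.ae_iff]; convert hνs using 2 <;> rfl
  have key : ∀ g : ℝ → ℝ, Continuous g → (∀ x, |g x| ≤ 1) →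
      ∫ x, g x ∂μ = ∫ x, g x ∂ν := by
    intro g hg hgb
    have hgint : ∀ (ρ : Measure ℝ), IsProbabilityMeasure ρ → Integrable g ρ := by
      intro ρ hρ
      apply Integrable.mono' (integrable_const (1:ℝ)) hg.aestronglyMeasurable
      exact Filter.Eventually.of_forall fun x => by rw [Real.norm_eq_abs]; exact hgb x
    by_contra hne
    set D := ∫ x, g x ∂μ - ∫ x, g x ∂ν with hD
    have hDne : D ≠ 0 := sub_ne_zero.mpr hne
    set ε := |D| / 4 with hε
    have hεpos : 0 < ε := by positivity
    -- Weierstrass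
    set gI : C(Set.Icc (0:ℝ) 1, ℝ) := ⟨fun x => g x, hg.comp continuous_subtype_val⟩ with hgI
    obtain ⟨p, hp⟩ := exists_polynomial_near_continuousMap 0 1 gI ε hεpos
    have hclose : ∀ x ∈ Set.Icc (0:ℝ) 1, |p.eval x - g x| ≤ ε := by
      intro x hx
      have := ContinuousMap.norm_coe_le_norm (p.toContinuousMapOn (Set.Icc (0:ℝ) 1) - gI)
        ⟨x, hx⟩
      rw [ContinuousMap.sub_apply] at this
      have h2 : (p.toContinuousMapOn (Set.Icc (0:ℝ) 1)) ⟨x, hx⟩ = p.eval x := rfl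
      have h3 : gI ⟨x, hx⟩ = g x := rfl
      rw [h2, h3, Real.norm_eq_abs] at this
      linarith [hp, this]
    have hpμν := poly_integral_eq hμs hνs hmom p
    have hbnd : ∀ (ρ : Measure ℝ), IsProbabilityMeasure ρ → (∀ᵐ x ∂ρ, x ∈ Set.Icc (0:ℝ) 1) →
        Integrable g ρ → Integrable (fun x => p.eval x) ρ →
        |∫ x, g x ∂ρ - ∫ x, p.eval x ∂ρ| ≤ ε := by
      intro ρ hρ hρae hgi hpi
      rw [← integral_sub hgi hpi]
      have := norm_integral_le_of_norm_le_const (μ := ρ) (C := ε)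
        (f := fun x => g x - p.eval x) ?_
      · rw [Real.norm_eq_abs] at this
        simpa using this
      · filter_upwards [hρae] with x hx
        rw [Real.norm_eq_abs, abs_sub_comm]
        exact hclose x hx
    have hpint : ∀ (ρ : Measure ℝ), IsProbabilityMeasure ρ → ρ (Set.Icc (0:ℝ) 1)ᶜ = 0 →
        Integrable (fun x => p.eval x) ρ := by
      intro ρ hρ hρs
      have hev : ∀ x : ℝ, p.eval x = ∑ i ∈ range (p.natDegree + 1), p.coeff i * x ^ i :=
        fun x => p.eval_eq_sum_range x
      simp_rw [hev]
      exact integrable_finset_sum _ fun i _ => (integrable_pow_of_supp hρs i).const_mul _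
    have h1 := hbnd μ inferInstance hμae (hgint μ inferInstance) (hpint μ inferInstance hμs)
    have h2 := hbnd ν inferInstance hνae (hgint ν inferInstance) (hpint ν inferInstance hνs)
    have : |D| ≤ 2 * ε := by
      have := abs_sub_abs_le_abs_sub D 0
      calc |D| = |(∫ x, g x ∂μ - ∫ x, p.eval x ∂μ) - (∫ x, g x ∂ν - ∫ x, p.eval x ∂ν)| := by
            rw [hD, hpμν]; ring_nf
        _ ≤ |∫ x, g x ∂μ - ∫ x, p.eval x ∂μ| + |∫ x, g x ∂ν - ∫ x, p.eval x ∂ν| :=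
            abs_sub _ _
        _ ≤ 2 * ε := by linarith
    rw [hε] at this
    have habs : 0 < |D| := abs_pos.mpr hDne
    linarith
  -- now the ℝ≥0 bounded continuous version
  apply ext_of_forall_lintegral_eq_of_IsFiniteMeasure
  intro f
  obtain ⟨C', hC'⟩ := f.bounded
  have hC'0 : 0 ≤ C' := le_trans dist_nonneg (hC' 0 0)
  set C : ℝ := ((f 0 : ℝ≥0) : ℝ) + C' with hCdef
  have hC : ∀ x : ℝ, ((f x : ℝ≥0) : ℝ) ≤ C := by
    intro x
    have h1 := hC' x 0
    rw [NNReal.dist_eq] at h1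
    have h2 := abs_le.mp h1
    rw [hCdef]
    linarith [h2.1]
  have hC0 : 0 ≤ C := add_nonneg (f 0).coe_nonneg hC'0
  have hfib : ∀ (ρ : Measure ℝ), IsProbabilityMeasure ρ →
      Integrable (fun x => ((f x : ℝ≥0) : ℝ)) ρ := by
    intro ρ hρ
    apply Integrable.mono' (integrable_const C)
      (NNReal.continuous_coe.comp f.continuous).aestronglyMeasurable
    apply Filter.Eventually.of_forall
    intro x
    show ‖((f x : ℝ≥0) : ℝ)‖ ≤ C
    rw [Real.norm_eq_abs, abs_of_nonneg (f x).coe_nonneg]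
    exact hC x
  rw [lintegral_coe_eq_integral f (hfib μ inferInstance),
    lintegral_coe_eq_integral f (hfib ν inferInstance)]
  congr 1
  rcases eq_or_lt_of_le hC0 with h0 | h0
  · have hz : ∀ x : ℝ, ((f x : ℝ≥0) : ℝ) = 0 := by
      intro x
      have h1 := hC x
      rw [← h0] at h1
      exact le_antisymm h1 (f x).coe_nonneg
    simp_rw [hz]
    simp
  · have hkey := key (fun x => ((f x : ℝ≥0) : ℝ) / C)
      (((NNReal.continuous_coe.comp f.continuous)).div_const _)
      (by
        intro x
        rw [abs_div, abs_of_nonneg (f x).coe_nonneg, abs_of_pos h0, div_le_one h0]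
        exact hC x)
    rw [integral_div, integral_div, div_eq_div_iff (ne_of_gt h0) (ne_of_gt h0)] at hkey
    exact mul_right_cancel₀ (ne_of_gt h0) hkey

/-- For a Pólya urn process, the almost-sure limit `Θ` of the proportion of
black balls `Z_t = b_t/(w_t + b_t)` has the `Beta(b₀/s, w₀/s)` distribution. -/
theorem polya_limit_is_beta
    {Ω : Type*} {mΩ : MeasurableSpace Ω} {P : Measure Ω} [IsProbabilityMeasure P]
    (w0 b0 s : ℝ) (hw : 0 < w0) (hb : 0 < b0) (hs : 0 < s)
    (X : ℕ → Ω → ℝ) (hX : ∀ t, StronglyMeasurable (X t))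
    (hval : ∀ t ω, X t ω = 0 ∨ X t ω = 1)
    (hlaw : ∀ (n : ℕ) (x : ℕ → Bool),
      P {ω | ∀ t < n, X t ω = if x t then 1 else 0} =
        ENNReal.ofReal (polyaJoint w0 b0 s x n))
    (Θ : Ω → ℝ) (hΘmeas : Measurable Θ)
    (hΘ : ∀ᵐ ω ∂P,
      Filter.Tendsto
        (fun t =>
          (b0 + s * ∑ i ∈ range t, X i ω) /
            ((w0 + s * ∑ i ∈ range t, (1 - X i ω)) +
              (b0 + s * ∑ i ∈ range t, X i ω)))
        Filter.atTop (nhds (Θ ω))) :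
    Measure.map Θ P = _root_.betaMeasure (b0 / s) (w0 / s) := by
  set a : ℝ := b0 / s with ha_def
  set b : ℝ := w0 / s with hb_def
  have ha : 0 < a := div_pos hb hs
  have hbb : 0 < b := div_pos hw hs
  have hmomP := moment_lemma hw hb hs X hX hval hlaw Θ hΘmeas hΘ
  set μ := Measure.map Θ P with hμ
  have hμprob : IsProbabilityMeasure μ := Measure.isProbabilityMeasure_map hΘmeas.aemeasurable
  have hνprob : IsProbabilityMeasure (_root_.betaMeasure a b) := beta_isProb ha hbb
  have hμmom : ∀ k : ℕ, ∫ x, x ^ k ∂μ = PP s k b0 / PP s k (w0 + b0) := by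
    intro k
    have hm : AEStronglyMeasurable (fun x : ℝ => x ^ k) (Measure.map Θ P) :=
      (continuous_pow k).aestronglyMeasurable
    rw [hμ, integral_map hΘmeas.aemeasurable hm]
    exact (hmomP k).1
  have hμsupp : μ (Set.Icc (0:ℝ) 1)ᶜ = 0 := by
    rw [hμ, Measure.map_apply hΘmeas measurableSet_Icc.compl]
    have h2 := (hmomP 0).2
    have hset : Θ ⁻¹' (Set.Icc (0:ℝ) 1)ᶜ = {ω | ¬ (Θ ω ∈ Set.Icc (0:ℝ) 1)} := rfl
    rw [hset]
    exact MeasureTheory.ae_iff.mp h2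
  have hνmom : ∀ k : ℕ, ∫ x, x ^ k ∂(_root_.betaMeasure a b) = PP s k b0 / PP s k (w0 + b0) := by
    intro k
    rw [beta_moment ha hbb k]
    unfold PP
    rw [← Finset.prod_div_distrib]
    apply Finset.prod_congr rfl
    intro j _
    have h1 : (0:ℝ) < w0 + b0 + j * s := by positivity
    rw [ha_def, hb_def]
    field_simp
    ring
  exact measure_ext_of_moments hμsupp beta_support
    (fun k => (hμmom k).trans (hνmom k).symm)
end

section
/- (Proposition 1, survival part) In the reinforced urn process, after observing the first m systems, the predictive probability that the (m+1)-th system survives beyond state r is P(ξ_{m+1} > r | ξ_1,…,ξ_m) = ∏_{j=0}^{r} (w_j + s f_j)/(w_j + s f_j + b_j + s d_j), where f_l = #{p ≤ m : ξ_p > l} and d_l = #{p ≤ m : ξ_p = l}. -/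
open Finset

/-- Probability that a single system, facing urns whose current compositions are
`(W j white, B j black)` for each state `j`, draws white at states `0, …, r-1`
(moving up one state after each white ball) and then black at state `r`,
i.e. that its 0-block ends at state `r`. Within one block every urn is sampled
at most once, so no reinforcement occurs inside the block. -/
noncomputable def blockProb (W B : ℕ → ℝ) (r : ℕ) : ℝ :=
  (B r / (W r + B r)) * ∏ j ∈ range r, W j / (W j + B j)

/-- Updated white compositions after observing a system that failed at state `r`:
each urn `j < r` delivered a white ball and receives `s` extra white balls. -/
noncomputable def updW (s : ℝ) (W : ℕ → ℝ) (r : ℕ) : ℕ → ℝ :=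
  fun j => if j < r then W j + s else W j

/-- Updated black compositions after observing a system that failed at state `r`:
urn `r` delivered a black ball and receives `s` extra black balls. -/
noncomputable def updB (s : ℝ) (B : ℕ → ℝ) (r : ℕ) : ℕ → ℝ :=
  fun j => if j = r then B j + s else B j

/-- Joint probability that the successive systems of the reinforced urn process
fail at the states listed in `a` : the first system fails at `a.head`, then the
urns are Pólya-reinforced, the second system fails at the next entry, etc. -/
noncomputable def jointXi (s : ℝ) (W B : ℕ → ℝ) : List ℕ → ℝ
  | [] => 1
  | r :: a => blockProb W B r * jointXi s (updW s W r) (updB s B r) a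

noncomputable def updWL (s : ℝ) (W : ℕ → ℝ) : List ℕ → ℕ → ℝ
  | [] => W
  | r :: a => updWL s (updW s W r) a

noncomputable def updBL (s : ℝ) (B : ℕ → ℝ) : List ℕ → ℕ → ℝ
  | [] => B
  | r :: a => updBL s (updB s B r) a

lemma updWL_apply (s : ℝ) (a : List ℕ) : ∀ (W : ℕ → ℝ) (j : ℕ),
    updWL s W a j = W j + s * (a.countP fun p => j < p) := by
  induction a with
  | nil => intro W j; simp [updWL]
  | cons r a ih =>
    intro W j
    rw [updWL, ih, List.countP_cons]
    simp only [updW]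
    by_cases h : j < r <;> simp [h] <;> ring

lemma updBL_apply (s : ℝ) (a : List ℕ) : ∀ (B : ℕ → ℝ) (j : ℕ),
    updBL s B a j = B j + s * (a.count j) := by
  induction a with
  | nil => intro B j; simp [updBL]
  | cons r a ih =>
    intro B j
    rw [updBL, ih, List.count_cons]
    simp only [updB]
    by_cases h : j = r
    · subst h; simp; ring
    · simp [h, Ne.symm h]

lemma jointXi_append (s : ℝ) (a : List ℕ) : ∀ (W B : ℕ → ℝ) (l : List ℕ),
    jointXi s W B (a ++ l) = jointXi s W B a * jointXi s (updWL s W a) (updBL s B a) l := by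
  induction a with
  | nil => intro W B l; simp [jointXi, updWL, updBL]
  | cons r a ih =>
    intro W B l
    simp only [List.cons_append, jointXi, updWL, updBL]
    rw [ih, mul_assoc]

lemma jointXi_pos (s : ℝ) (hs : 0 < s) (a : List ℕ) : ∀ (W B : ℕ → ℝ),
    (∀ j, 0 < W j) → (∀ j, 0 < B j) → 0 < jointXi s W B a := by
  induction a with
  | nil => intro W B _ _; simp [jointXi]
  | cons r a ih =>
    intro W B hW hB
    rw [jointXi]
    have h1 : 0 < blockProb W B r := by
      unfold blockProb
      exact mul_pos (div_pos (hB r) (by linarith [hW r, hB r]))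
        (Finset.prod_pos fun j _ => div_pos (hW j) (by linarith [hW j, hB j]))
    have h2 : 0 < jointXi s (updW s W r) (updB s B r) a := by
      apply ih
      · intro j; unfold updW; split <;> [linarith [hW j]; exact hW j]
      · intro j; unfold updB; split <;> [linarith [hB j]; exact hB j]
    exact mul_pos h1 h2

lemma sum_blockProb (W B : ℕ → ℝ) (hW : ∀ j, 0 < W j) (hB : ∀ j, 0 < B j) (r : ℕ) :
    ∑ r' ∈ range (r + 1), blockProb W B r' =
      1 - ∏ j ∈ range (r + 1), W j / (W j + B j) := by
  have key : ∀ r', blockProb W B r' =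
      (∏ j ∈ range r', W j / (W j + B j)) - ∏ j ∈ range (r' + 1), W j / (W j + B j) := by
    intro r'
    rw [prod_range_succ, blockProb]
    have h : W r' + B r' ≠ 0 := by have := hW r'; have := hB r'; positivity
    have hbb : B r' / (W r' + B r') = 1 - W r' / (W r' + B r') := by field_simp; ring
    rw [hbb]; ring
  calc ∑ r' ∈ range (r + 1), blockProb W B r'
      = ∑ r' ∈ range (r + 1), ((∏ j ∈ range r', W j / (W j + B j))
          - ∏ j ∈ range (r' + 1), W j / (W j + B j)) := by
        exact Finset.sum_congr rfl fun r' _ => key r'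
    _ = _ := by rw [Finset.sum_range_sub' (fun n => ∏ j ∈ range n, W j / (W j + B j))]; simp

/-- Proposition 1 (survival part): after observing `m` systems failing at the
states listed in `a`, the predictive probability that the next system survives
beyond state `r` is
`P(ξ_{m+1} > r | ξ₁,…,ξ_m) = ∏_{j=0}^r (w_j + s f_j)/(w_j + s f_j + b_j + s d_j)`,
where `f_l` counts the observed systems surviving past `l` and `d_l` those
failing at `l`. (Since `ξ_{m+1}` is finite almost surely, the conditional
survival probability is `1 - ∑_{r'≤r} P(ξ_{m+1} = r' | ξ₁,…,ξ_m)`.) -/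
theorem rup_predictive_survival (w b : ℕ → ℝ) (s : ℝ)
    (hw : ∀ j, 0 < w j) (hb : ∀ j, 0 < b j) (hs : 0 < s)
    (hrec : Filter.Tendsto (fun n => ∏ j ∈ range (n + 1), w j / (w j + b j))
      Filter.atTop (nhds 0))
    (a : List ℕ) (r : ℕ)
    (f d : ℕ → ℕ)
    (hf : ∀ l, f l = a.countP fun p => l < p)
    (hd : ∀ l, d l = a.count l) :
    1 - (∑ r' ∈ range (r + 1), jointXi s w b (a ++ [r'])) / jointXi s w b a =
      ∏ j ∈ range (r + 1), (w j + s * f j) / (w j + s * f j + (b j + s * d j)) := by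
  have hW' : ∀ j, 0 < updWL s w a j := by
    intro j; rw [updWL_apply]; have := hw j; positivity
  have hB' : ∀ j, 0 < updBL s b a j := by
    intro j; rw [updBL_apply]; have := hb j; positivity
  have hja : jointXi s w b a ≠ 0 := (jointXi_pos s hs a w b hw hb).ne'
  have hsum : ∑ r' ∈ range (r + 1), jointXi s w b (a ++ [r']) =
      jointXi s w b a * ∑ r' ∈ range (r + 1), blockProb (updWL s w a) (updBL s b a) r' := by
    rw [Finset.mul_sum]
    refine Finset.sum_congr rfl fun r' _ => ?_
    rw [jointXi_append]
    simp [jointXi]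
  rw [hsum, mul_comm, mul_div_assoc, div_self hja, mul_one,
    sum_blockProb _ _ hW' hB', sub_sub_cancel]
  refine Finset.prod_congr rfl fun j _ => ?_
  rw [updWL_apply, updBL_apply, hf, hd]
end
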